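/- In a spacetime-like structure, if the chronological relation ≪ is open, transitive, contained in the causal relation ≤ (a preorder), and if two distinct points x, z satisfy: z ∈ Ω_f(γ_x) for a curve γ_x through x and x ∈ Ω_f(γ_z) for a curve γ_z through z (with each point of the ω-limit set chronologically preceding exactly what the curve's points do), then I⁺(x) = I⁺(z) and I⁻(x) = I⁻(z); concretely: if for every z' ≫ z there is a point of γ_x in I⁻(z') arbitrarily far along γ_x, and all points of γ_x are in I⁺(x) ∪ {x} with x ≤ each, then I⁺(z) ⊆ I⁺(x), and symmetrically I⁺(x) ⊆ I⁺(z). -/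
import Mathlib


open Set

theorem chron_future_subset_of_mem_omegaLimit {M : Type*} [TopologicalSpace M]
    (chron caus : M → M → Prop)
    (hopen : IsOpen {p : M × M | chron p.1 p.2})
    (hchron_trans : ∀ p q r, chron p q → chron q r → chron p r)
    (hrefl : ∀ p, caus p p) (htrans : ∀ p q r, caus p q → caus q r → caus p r)
    (hsub : ∀ p q, chron p q → caus p q)
    (hcomp : ∀ p q r, caus p q → chron q r → chron p r)
    (γ : ℝ → M) (hγ : Continuous γ) (x : M) (hx : γ 0 = x)
    (hmono : ∀ s : ℝ, 0 ≤ s → caus x (γ s))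
    (z : M) (hz : z ∈ ⋂ t : ℝ, closure (γ '' Ici t)) :
    ∀ w, chron z w → chron x w := by
  intro w hzw
  have hopenU : IsOpen {p : M | chron p w} :=
    hopen.preimage (f := fun p : M => (p, w)) (by continuity)
  have hz0 : z ∈ closure (γ '' Ici (0 : ℝ)) := by
    have := mem_iInter.mp hz 0; exact this
  obtain ⟨y, hyU, s, hs, rfl⟩ :=
    mem_closure_iff.mp hz0 _ hopenU hzw
  exact hcomp _ _ _ (hmono s hs) hyU
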